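/- Let f : [a,b] → ℝ be (l,L)-Lipschitzian. Then the trapezoid rule satisfies |((b-a)/2)(f(a)+f(b)) - ∫ₐᵇ f(t)dt| ≤ ((b-a)²/8)(L - l). -/

import Mathlib

open MeasureTheory intervalIntegral

lemma lin_int (x y c k d : ℝ) :
    ∫ t in x..y, (c + k * (t - d)) =
      (c * y + k / 2 * (y - d) ^ 2) - (c * x + k / 2 * (x - d) ^ 2) := by
  apply intervalIntegral.integral_eq_sub_of_hasDerivAt
  · intro t _
    have h : HasDerivAt (fun t : ℝ => c * t + k / 2 * (t - d) ^ 2)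
        (c * 1 + k / 2 * (2 * (t - d) ^ 1 * 1)) t := by
      exact ((hasDerivAt_id t).const_mul c).add
        ((((hasDerivAt_id t).sub_const d).pow 2).const_mul (k / 2))
    convert h using 1
    exacts [rfl, rfl, by ring]
  · exact (Continuous.intervalIntegrable (by fun_prop) x y)

theorem stmt_6 (a b l L : ℝ) (f : ℝ → ℝ) (hab : a < b) (hlL : l < L)
    (hf : ∀ x₁ x₂, a ≤ x₁ → x₁ ≤ x₂ → x₂ ≤ b →
      l * (x₂ - x₁) ≤ f x₂ - f x₁ ∧ f x₂ - f x₁ ≤ L * (x₂ - x₁))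
    (hint : IntervalIntegrable f MeasureTheory.volume a b) :
    |(b - a) / 2 * (f a + f b) - ∫ t in a..b, f t| ≤ (b - a) ^ 2 / 8 * (L - l) := by
  set m := (a + b) / 2 with hm
  have ham : a ≤ m := by rw [hm]; linarith
  have hmb : m ≤ b := by rw [hm]; linarith
  have hfi1 : IntervalIntegrable f volume a m :=
    hint.mono_set (Set.uIcc_subset_uIcc (Set.left_mem_uIcc)
      (by rw [Set.mem_uIcc]; left; exact ⟨ham.trans' le_rfl, hmb⟩))
  have hfi2 : IntervalIntegrable f volume m b :=
    hint.mono_set (Set.uIcc_subset_uIcc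
      (by rw [Set.mem_uIcc]; left; exact ⟨ham, hmb⟩) (Set.right_mem_uIcc))
  have hsplit : (∫ t in a..m, f t) + ∫ t in m..b, f t = ∫ t in a..b, f t :=
    intervalIntegral.integral_add_adjacent_intervals hfi1 hfi2
  -- lower bound on ∫ a..m via line through (a, f a) slope l
  have h1 : (∫ t in a..m, (f a + l * (t - a))) ≤ ∫ t in a..m, f t := by
    apply intervalIntegral.integral_mono_on ham
      (Continuous.intervalIntegrable (by fun_prop) a m) hfi1
    intro t ht
    have := (hf a t le_rfl ht.1 (ht.2.trans hmb)).1
    linarith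
  have h1' : (∫ t in a..m, f t) ≤ ∫ t in a..m, (f a + L * (t - a)) := by
    apply intervalIntegral.integral_mono_on ham hfi1
      (Continuous.intervalIntegrable (by fun_prop) a m)
    intro t ht
    have := (hf a t le_rfl ht.1 (ht.2.trans hmb)).2
    linarith
  have h2 : (∫ t in m..b, (f b + L * (t - b))) ≤ ∫ t in m..b, f t := by
    apply intervalIntegral.integral_mono_on hmb
      (Continuous.intervalIntegrable (by fun_prop) m b) hfi2
    intro t ht
    have := (hf t b (ham.trans ht.1) ht.2 le_rfl).2
    linarith
  have h2' : (∫ t in m..b, f t) ≤ ∫ t in m..b, (f b + l * (t - b)) := by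
    apply intervalIntegral.integral_mono_on hmb hfi2
      (Continuous.intervalIntegrable (by fun_prop) m b)
    intro t ht
    have := (hf t b (ham.trans ht.1) ht.2 le_rfl).1
    linarith
  rw [lin_int] at h1 h1' h2 h2'
  rw [hm] at h1 h1' h2 h2'
  rw [abs_le]
  constructor
  · nlinarith [h1', h2', hsplit]
  · nlinarith [h1, h2, hsplit]
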